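/- Let P(η) = -(1/4)(η⁴ + 2p₀η² - 8ρη + q₀) as above, and assume x₀ ≠ 0 or (z₀+ρ)(y₀+1) ≠ ρ. Then P has at least two distinct real roots. -/

import Mathlib

open Filter Set Topology

/-- If a differentiable function vanishes at `c` with nonzero derivative,
it takes a positive value somewhere. -/
lemma aux_pos_somewhere (f : ℝ → ℝ) (c L : ℝ) (hf : HasDerivAt f L c)
    (hfc : f c = 0) (hL : L ≠ 0) : ∃ d : ℝ, 0 < f d := by
  have hs := hasDerivAt_iff_tendsto_slope.mp hf
  rcases hL.lt_or_gt with h | h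
  · have hs' : Tendsto (slope f c) (𝓝[<] c) (𝓝 L) :=
      hs.mono_left (nhdsWithin_mono c (fun x hx => ne_of_lt hx))
    have h1 : ∀ᶠ x in 𝓝[<] c, slope f c x < 0 := hs'.eventually_lt_const h
    obtain ⟨x, hx1, hx2⟩ := (h1.and self_mem_nhdsWithin).exists
    refine ⟨x, ?_⟩
    have hxc : x - c < 0 := sub_neg.mpr hx2
    have hsl : (f x - f c) / (x - c) < 0 := by
      simpa [slope_def_field] using hx1
    rcases div_neg_iff.mp hsl with ⟨hn, hd⟩ | ⟨hn, hd⟩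
    · linarith
    · linarith
  · have hs' : Tendsto (slope f c) (𝓝[>] c) (𝓝 L) :=
      hs.mono_left (nhdsWithin_mono c (fun x hx => ne_of_gt hx))
    have h1 : ∀ᶠ x in 𝓝[>] c, 0 < slope f c x := hs'.eventually_const_lt h
    obtain ⟨x, hx1, hx2⟩ := (h1.and self_mem_nhdsWithin).exists
    refine ⟨x, ?_⟩
    have hxc : 0 < x - c := sub_pos.mpr hx2
    have hsl : 0 < (f x - f c) / (x - c) := by
      simpa [slope_def_field] using hx1
    rcases div_pos_iff.mp hsl with ⟨hn, hd⟩ | ⟨hn, hd⟩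
    · linarith
    · linarith

/-- A continuous function which is positive somewhere and negative on both
sides has two distinct zeros. -/
lemma aux_two_roots (P : ℝ → ℝ) (hP : Continuous P) (d a b : ℝ)
    (hd : 0 < P d) (ha : a < d) (hb : d < b) (hPa : P a < 0) (hPb : P b < 0) :
    ∃ r s : ℝ, r ≠ s ∧ P r = 0 ∧ P s = 0 := by
  obtain ⟨r, hr, hr0⟩ := intermediate_value_Icc ha.le hP.continuousOn
    (show (0:ℝ) ∈ Set.Icc (P a) (P d) from ⟨hPa.le, hd.le⟩)
  obtain ⟨s, hs, hs0⟩ := intermediate_value_Icc' hb.le hP.continuousOn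
    (show (0:ℝ) ∈ Set.Icc (P b) (P d) from ⟨hPb.le, hd.le⟩)
  refine ⟨r, s, ?_, hr0, hs0⟩
  have hrd : r < d := lt_of_le_of_ne hr.2 (fun h => by rw [h] at hr0; linarith)
  exact ne_of_lt (lt_of_lt_of_le hrd hs.1)

/-- Monic quartic dominance: if `|t|` is large the quartic is positive. -/
lemma aux_quartic_pos (p q r t : ℝ) (ht : 1 + |p| + |q| + |r| ≤ |t|) :
    0 < t ^ 4 + p * t ^ 2 + q * t + r := by
  have h1 : (1:ℝ) ≤ |t| := by
    have := abs_nonneg p; have := abs_nonneg q; have := abs_nonneg r; linarith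
  have hp : -|p| ≤ p := neg_abs_le p
  have hq : -(|q| * |t|) ≤ q * t := by
    have := neg_abs_le (q * t); rwa [abs_mul] at this
  have hr : -|r| ≤ r := neg_abs_le r
  have ht2 : t ^ 2 = |t| ^ 2 := (sq_abs t).symm
  have ht4 : t ^ 4 = |t| ^ 4 := by
    rw [show (4:ℕ) = 2*2 from rfl, pow_mul, pow_mul, sq_abs]
  nlinarith [sq_nonneg (|t|), abs_nonneg p, abs_nonneg q, abs_nonneg r,
    mul_le_mul_of_nonneg_left ht (abs_nonneg t),
    mul_le_mul_of_nonneg_left h1 (abs_nonneg p),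
    mul_le_mul_of_nonneg_left h1 (abs_nonneg t),
    sq_nonneg (|t| - 1), sq_nonneg (|t| ^ 2 - |t|)]

/- If x₀ ≠ 0 or (z₀+ρ)(y₀+1) ≠ ρ, then the quartic
   P(η) = -(1/4)(η⁴ + 2p₀η² - 8ρη + q₀) has at least two distinct real roots. -/
theorem stmt_12 (x₀ y₀ z₀ ρ : ℝ)
    (hnc : x₀ ≠ 0 ∨ (z₀ + ρ) * (y₀ + 1) ≠ ρ) :
    let p₀ := 2 * (y₀ + 1) - (z₀ + ρ) ^ 2
    let q₀ := p₀ ^ 2 + 8 * ρ * (z₀ + ρ) - 4 * (x₀ ^ 2 + (y₀ + 1) ^ 2)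
    let P : ℝ → ℝ := fun η => -(1 / 4) * (η ^ 4 + 2 * p₀ * η ^ 2 - 8 * ρ * η + q₀)
    ∃ a b : ℝ, a ≠ b ∧ P a = 0 ∧ P b = 0 := by
  intro p₀ q₀ P
  have hcont : Continuous P := by
    show Continuous fun η : ℝ => -(1/4) * (η ^ 4 + 2 * p₀ * η ^ 2 - 8 * ρ * η + q₀)
    fun_prop
  set c : ℝ := z₀ + ρ with hc
  have hPc : P c = x₀ ^ 2 := by
    show -(1/4) * (c ^ 4 + 2 * p₀ * c ^ 2 - 8 * ρ * c + q₀) = x₀ ^ 2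
    simp only [q₀, p₀, hc]; ring
  -- find a point where P is positive
  have hex : ∃ d : ℝ, 0 < P d := by
    by_cases hx : x₀ = 0
    · rcases hnc with h | hz
      · exact absurd hx h
      · -- use derivative argument at c
        have hD : HasDerivAt P (-(1/4) * ((4:ℕ) * c ^ 3 + 2 * p₀ * ((2:ℕ) * c ^ 1) - 8 * ρ * 1 + 0)) c := by
          have h4 := hasDerivAt_pow 4 c
          have h2 := (hasDerivAt_pow 2 c).const_mul (2 * p₀)
          have h1 := (hasDerivAt_id c).const_mul (8 * ρ)
          have := (((h4.add h2).sub (by simpa using h1)).add_const q₀).const_mul (-(1/4) : ℝ)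
          convert this using 2 <;> first | rfl | ring
        have hL : (-(1/4) * ((4:ℕ) * c ^ 3 + 2 * p₀ * ((2:ℕ) * c ^ 1) - 8 * ρ * 1 + 0) : ℝ)
            = 2 * (ρ - (y₀ + 1) * c) := by
          simp only [p₀]; push_cast; ring
        rw [hL] at hD
        have hL0 : 2 * (ρ - (y₀ + 1) * c) ≠ 0 := by
          intro h; apply hz; linear_combination (-1/2 : ℝ) * h
        have hfc : P c = 0 := by rw [hPc, hx]; ring
        exact aux_pos_somewhere P c _ hD hfc hL0
    · exact ⟨c, by rw [hPc]; positivity⟩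
  obtain ⟨d, hd⟩ := hex
  have habs : ∀ t : ℝ, 1 + |2 * p₀| + |(-8) * ρ| + |q₀| ≤ |t| → P t < 0 := by
    intro t ht
    have key := aux_quartic_pos (2 * p₀) ((-8) * ρ) q₀ t ht
    show -(1/4) * (t ^ 4 + 2 * p₀ * t ^ 2 - 8 * ρ * t + q₀) < 0
    clear_value P
    clear_value q₀
    clear_value p₀
    linarith [key]
  set M : ℝ := |d| + (1 + |2 * p₀| + |(-8) * ρ| + |q₀|) with hM
  have hM1 : 1 + |2 * p₀| + |(-8) * ρ| + |q₀| ≤ M := by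
    have := abs_nonneg d; linarith
  have hMpos : 0 < M := by
    have := abs_nonneg d; have := abs_nonneg (2*p₀); have := abs_nonneg ((-8)*ρ)
    have := abs_nonneg q₀; simp only [hM]; linarith
  have hdM : |d| < M := by
    have := abs_nonneg (2*p₀); have := abs_nonneg ((-8)*ρ); have := abs_nonneg q₀
    simp only [hM]; linarith
  have ha : -M < d := by
    have := neg_abs_le d; linarith
  have hb : d < M := (le_abs_self d).trans_lt hdM
  have hPa : P (-M) < 0 := by
    apply habs; rw [abs_neg, abs_of_pos hMpos]; exact hM1
  have hPb : P M < 0 := by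
    apply habs; rw [abs_of_pos hMpos]; exact hM1
  exact aux_two_roots P hcont d (-M) M hd ha hb hPa hPb
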